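/- Let (Ω, F, μ) be a probability space with a filtration F_0 ⊆ F_1 ⊆ … ⊆ F_T ⊆ F. For each t ∈ {1,…,T}, let B_t : Ω → {0,1} be an F_t-measurable random variable and let H_t ∈ F_{t−1} be an event, and let p ∈ [0,1]. Suppose that for each t, almost everywhere on H_t the conditional expectation satisfies E[B_t | F_{t−1}] ≥ p. Then E[ exp(−∑_{t=1}^T B_t) · ∏_{t=1}^T 1_{H_t} ] ≤ exp(−(1 − e^{−1})·p·T). -/

import Mathlib

open MeasureTheory

/-- Let (Ω, F, μ) be a probability space with a filtration (F_t). For t ∈ {1,…,T},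
let B_t be an F_t-measurable {0,1}-valued random variable and H_t ∈ F_{t−1} an event,
and let p ∈ [0,1]. If for each t, almost everywhere on H_t we have E[B_t | F_{t−1}] ≥ p,
then E[exp(−∑_{t=1}^T B_t)·∏_{t=1}^T 1_{H_t}] ≤ exp(−(1 − e⁻¹)·p·T). -/
theorem exp_sum_indicator_bound
    {Ω : Type*} {m0 : MeasurableSpace Ω} (μ : Measure Ω) [IsProbabilityMeasure μ]
    (F : Filtration ℕ m0) (T : ℕ)
    (B : ℕ → Ω → ℝ) (H : ℕ → Set Ω) (p : ℝ) (hp0 : 0 ≤ p) (hp1 : p ≤ 1)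
    (hBmeas : ∀ t ∈ Finset.Icc 1 T, Measurable[F t] (B t))
    (hBer : ∀ t ∈ Finset.Icc 1 T, ∀ ω, B t ω = 0 ∨ B t ω = 1)
    (hH : ∀ t ∈ Finset.Icc 1 T, MeasurableSet[F (t - 1)] (H t))
    (hcond : ∀ t ∈ Finset.Icc 1 T, ∀ᵐ ω ∂μ, ω ∈ H t → p ≤ (μ[B t | F (t - 1)]) ω) :
    ∫ ω, Real.exp (-(∑ t ∈ Finset.Icc 1 T, B t ω)) *
        ∏ t ∈ Finset.Icc 1 T, (H t).indicator (fun _ => (1 : ℝ)) ω ∂μ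
      ≤ Real.exp (-(1 - Real.exp (-1)) * p * T) := by
  set c : ℝ := 1 - Real.exp (-1) with hcdef
  have hepos : (0 : ℝ) < Real.exp (-1) := Real.exp_pos _
  have hec : Real.exp (-1) < 1 := by
    rw [Real.exp_lt_one_iff]; norm_num
  have hc0 : 0 < c := by rw [hcdef]; linarith
  have hc1 : c ≤ 1 := by rw [hcdef]; linarith
  set f : ℕ → Ω → ℝ :=
    fun t ω => (1 - c * B t ω) * (H t).indicator (fun _ => (1 : ℝ)) ω with hfdef
  -- pointwise bounds on f
  have hf01 : ∀ t ∈ Finset.Icc 1 T, ∀ ω, 0 ≤ f t ω ∧ f t ω ≤ 1 := by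
    intro t ht ω
    rcases hBer t ht ω with h | h <;> by_cases hω : ω ∈ H t <;>
      simp [hfdef, h, hω] <;> constructor <;> linarith
  -- measurability of f t w.r.t. F t
  have hfmeas : ∀ t ∈ Finset.Icc 1 T, Measurable[F t] (f t) := by
    intro t ht
    have h2 : MeasurableSet[F t] (H t) := F.mono (Nat.sub_le t 1) _ (hH t ht)
    exact (measurable_const.sub ((hBmeas t ht).const_mul c)).mul
      (measurable_const.indicator h2)
  -- measurability of partial products
  have hGmeas : ∀ n, n ≤ T →
      Measurable[F n] (fun ω => ∏ t ∈ Finset.Icc 1 n, f t ω) := by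
    intro n hn
    apply Finset.measurable_prod
    intro t ht
    obtain ⟨ht1, ht2⟩ := Finset.mem_Icc.mp ht
    exact (hfmeas t (Finset.mem_Icc.mpr ⟨ht1, ht2.trans hn⟩)).mono (F.mono ht2) le_rfl
  have hGbd : ∀ n, n ≤ T → ∀ ω,
      0 ≤ ∏ t ∈ Finset.Icc 1 n, f t ω ∧ ∏ t ∈ Finset.Icc 1 n, f t ω ≤ 1 := by
    intro n hn ω
    have hmem : ∀ t ∈ Finset.Icc 1 n, t ∈ Finset.Icc 1 T := by
      intro t ht
      obtain ⟨ht1, ht2⟩ := Finset.mem_Icc.mp ht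
      exact Finset.mem_Icc.mpr ⟨ht1, ht2.trans hn⟩
    constructor
    · exact Finset.prod_nonneg fun t ht => (hf01 t (hmem t ht) ω).1
    · exact Finset.prod_le_one (fun t ht => (hf01 t (hmem t ht) ω).1)
        (fun t ht => (hf01 t (hmem t ht) ω).2)
  have hGint : ∀ n, n ≤ T →
      Integrable (fun ω => ∏ t ∈ Finset.Icc 1 n, f t ω) μ := by
    intro n hn
    refine (integrable_const (1 : ℝ)).mono'
      (((hGmeas n hn).mono (F.le n) le_rfl).aestronglyMeasurable) ?_
    filter_upwards with ω
    rw [Real.norm_eq_abs, abs_le]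
    exact ⟨by linarith [(hGbd n hn ω).1], (hGbd n hn ω).2⟩
  -- the key induction
  have key : ∀ n, n ≤ T →
      ∫ ω, ∏ t ∈ Finset.Icc 1 n, f t ω ∂μ ≤ Real.exp (-(c * p)) ^ n := by
    intro n
    induction n with
    | zero => intro _; simp
    | succ n ih =>
      intro hn
      have hn' : n ≤ T := (Nat.le_succ n).trans hn
      have htmem : n + 1 ∈ Finset.Icc 1 T :=
        Finset.mem_Icc.mpr ⟨Nat.succ_le_succ (Nat.zero_le n), hn⟩
      have hsplit : ∀ ω, ∏ t ∈ Finset.Icc 1 (n + 1), f t ω =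
          (∏ t ∈ Finset.Icc 1 n, f t ω) * f (n + 1) ω := by
        intro ω
        exact Finset.prod_Icc_succ_top (Nat.succ_le_succ (Nat.zero_le n)) _
      have hBint : Integrable (B (n + 1)) μ := by
        refine (integrable_const (1 : ℝ)).mono'
          (((hBmeas _ htmem).mono (F.le _) le_rfl).aestronglyMeasurable) ?_
        filter_upwards with ω
        rcases hBer _ htmem ω with h | h <;> simp [h]
      have hHn : MeasurableSet[F n] (H (n + 1)) := by
        have := hH _ htmem
        simpa using this
      -- conditional expectation of u := 1 - c * B (n+1)
      have hu : μ[(fun ω => (1 : ℝ) - c * B (n + 1) ω) | F n] =ᵐ[μ]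
          fun ω => 1 - c * (μ[B (n + 1) | F n]) ω := by
        have hrepr : (fun ω => (1 : ℝ) - c * B (n + 1) ω) =
            (fun _ => (1 : ℝ)) - c • B (n + 1) := by
          funext ω; simp
        rw [hrepr]
        have hsub := condExp_sub (μ := μ) (m := F n) (integrable_const (1 : ℝ))
          ((hBint).smul c)
        have hsmul := condExp_smul (μ := μ) (m := F n) (c : ℝ) (B (n + 1))
        have hcst := condExp_const (μ := μ) (F.le n) (1 : ℝ)
        filter_upwards [hsub, hsmul] with ω h1 h2
        simp only [Pi.sub_apply, Pi.smul_apply, smul_eq_mul] at h1 h2 ⊢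
        rw [h1, h2, hcst]
      -- integrability of f (n+1)
      have hfint : Integrable (f (n + 1)) μ := by
        refine (integrable_const (1 : ℝ)).mono'
          (((hfmeas _ htmem).mono (F.le _) le_rfl).aestronglyMeasurable) ?_
        filter_upwards with ω
        rw [Real.norm_eq_abs, abs_le]
        exact ⟨by linarith [(hf01 _ htmem ω).1], (hf01 _ htmem ω).2⟩
      -- conditional expectation of f (n+1): pull out the indicator
      have hfrepr : f (n + 1) = fun ω =>
          (H (n + 1)).indicator (fun _ => (1 : ℝ)) ω * (1 - c * B (n + 1) ω) := by
        funext ω; rw [hfdef]; ring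
      have huint : Integrable (fun ω => (1 : ℝ) - c * B (n + 1) ω) μ :=
        (integrable_const (1 : ℝ)).sub (hBint.const_mul c)
      have heq : f (n + 1) =
          ((H (n + 1)).indicator fun _ => (1 : ℝ)) * fun ω => 1 - c * B (n + 1) ω := by
        funext ω
        simp only [hfdef, Pi.mul_apply]
        ring
      have hpull : μ[f (n + 1) | F n] =ᵐ[μ]
          fun ω => (H (n + 1)).indicator (fun _ => (1 : ℝ)) ω *
            (1 - c * (μ[B (n + 1) | F n]) ω) := by
        rw [heq]
        have h1 := condExp_mul_of_stronglyMeasurable_left (μ := μ) (m := F n)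
          (f := (H (n + 1)).indicator (fun _ => (1 : ℝ)))
          (g := fun ω => (1 : ℝ) - c * B (n + 1) ω)
          ((measurable_const.indicator hHn).stronglyMeasurable)
          (heq ▸ hfint) huint
        filter_upwards [h1, hu] with ω hω1 hω2
        rw [hω1]
        simp only [Pi.mul_apply]
        rw [hω2]
      -- a.e. bound on the conditional expectation
      have hbound : ∀ᵐ ω ∂μ, (μ[f (n + 1) | F n]) ω ≤ Real.exp (-(c * p)) := by
        have hcnd := hcond _ htmem
        simp only [Nat.add_sub_cancel] at hcnd
        filter_upwards [hpull, hcnd] with ω hω1 hω2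
        rw [hω1]
        by_cases hω : ω ∈ H (n + 1)
        · rw [Set.indicator_of_mem hω, one_mul]
          have h1 : p ≤ (μ[B (n + 1) | F n]) ω := hω2 hω
          have h2 : 1 - c * (μ[B (n + 1) | F n]) ω ≤ 1 - c * p := by nlinarith
          have h3 : 1 - c * p ≤ Real.exp (-(c * p)) := by
            have := Real.add_one_le_exp (-(c * p))
            linarith
          linarith
        · rw [Set.indicator_of_notMem hω, zero_mul]
          exact (Real.exp_pos _).le
      -- put it together
      set G : Ω → ℝ := fun ω => ∏ t ∈ Finset.Icc 1 n, f t ω with hGdef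
      have hGf_int : Integrable (fun ω => G ω * f (n + 1) ω) μ := by
        have := hGint (n + 1) hn
        refine this.congr ?_
        filter_upwards with ω
        rw [hsplit ω]
      have hstep1 : ∫ ω, ∏ t ∈ Finset.Icc 1 (n + 1), f t ω ∂μ =
          ∫ ω, G ω * f (n + 1) ω ∂μ := by
        apply integral_congr_ae
        filter_upwards with ω
        exact hsplit ω
      have hpull2 : μ[(fun ω => G ω * f (n + 1) ω) | F n] =ᵐ[μ]
          fun ω => G ω * (μ[f (n + 1) | F n]) ω :=
        condExp_mul_of_stronglyMeasurable_left (hGmeas n hn').stronglyMeasurable hGf_int hfint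
      have hstep2 : ∫ ω, G ω * f (n + 1) ω ∂μ =
          ∫ ω, G ω * (μ[f (n + 1) | F n]) ω ∂μ := by
        rw [← integral_condExp (F.le n) (f := fun ω => G ω * f (n + 1) ω)]
        exact integral_congr_ae hpull2
      have hGcond_int : Integrable (fun ω => G ω * (μ[f (n + 1) | F n]) ω) μ := by
        refine Integrable.bdd_mul (c := 1) integrable_condExp
          (((hGmeas n hn').mono (F.le n) le_rfl).aestronglyMeasurable) (Filter.Eventually.of_forall fun ω => ?_)
        rw [Real.norm_eq_abs, abs_le]
        exact ⟨by linarith [(hGbd n hn' ω).1], (hGbd n hn' ω).2⟩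
      have hstep3 : ∫ ω, G ω * (μ[f (n + 1) | F n]) ω ∂μ ≤
          ∫ ω, G ω * Real.exp (-(c * p)) ∂μ := by
        apply integral_mono_ae hGcond_int ((hGint n hn').mul_const _)
        filter_upwards [hbound] with ω hω
        exact mul_le_mul_of_nonneg_left hω (hGbd n hn' ω).1
      have hstep4 : ∫ ω, G ω * Real.exp (-(c * p)) ∂μ ≤
          Real.exp (-(c * p)) ^ (n + 1) := by
        rw [integral_mul_const, pow_succ]
        exact mul_le_mul_of_nonneg_right (ih hn') (Real.exp_pos _).le
      calc ∫ ω, ∏ t ∈ Finset.Icc 1 (n + 1), f t ω ∂μ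
          = ∫ ω, G ω * (μ[f (n + 1) | F n]) ω ∂μ := by rw [hstep1, hstep2]
        _ ≤ ∫ ω, G ω * Real.exp (-(c * p)) ∂μ := hstep3
        _ ≤ Real.exp (-(c * p)) ^ (n + 1) := hstep4
  -- rewrite the original integrand
  have hrw : ∀ ω, Real.exp (-(∑ t ∈ Finset.Icc 1 T, B t ω)) *
      ∏ t ∈ Finset.Icc 1 T, (H t).indicator (fun _ => (1 : ℝ)) ω =
      ∏ t ∈ Finset.Icc 1 T, f t ω := by
    intro ω
    have h1 : Real.exp (-(∑ t ∈ Finset.Icc 1 T, B t ω)) =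
        ∏ t ∈ Finset.Icc 1 T, (1 - c * B t ω) := by
      rw [← Finset.sum_neg_distrib, Real.exp_sum]
      apply Finset.prod_congr rfl
      intro t ht
      rcases hBer t ht ω with h | h <;> simp [h, hcdef]
    rw [h1, ← Finset.prod_mul_distrib]
  have hfinal := key T le_rfl
  calc ∫ ω, Real.exp (-(∑ t ∈ Finset.Icc 1 T, B t ω)) *
        ∏ t ∈ Finset.Icc 1 T, (H t).indicator (fun _ => (1 : ℝ)) ω ∂μ
      = ∫ ω, ∏ t ∈ Finset.Icc 1 T, f t ω ∂μ := by
        apply integral_congr_ae; filter_upwards with ω; exact hrw ω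
    _ ≤ Real.exp (-(c * p)) ^ T := hfinal
    _ = Real.exp (-(1 - Real.exp (-1)) * p * T) := by
        rw [← Real.exp_nat_mul]
        congr 1
        rw [hcdef]; ring
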